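/- If f is in the kernel of D on all functions on the p-adic tree and its weak boundary limit is zero (i.e. lim_{n→∞} f̂_n(l p^{n−m}) = 0 for all m and all l with p ∤ l), then f is identically zero. -/

import Mathlib

open Finset Complex Filter



lemma orth (N : ℕ) (hN : 0 < N) (j k : ℕ) (hj : j < N) (hk : k < N) :
    ∑ l ∈ Finset.range N,
      Complex.exp (-(2 * Real.pi * Complex.I) * (j : ℂ) * (l : ℂ) / (N : ℂ)) *
      Complex.exp ((2 * Real.pi * Complex.I) * (k : ℂ) * (l : ℂ) / (N : ℂ))
    = if j = k then (N : ℂ) else 0 := by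
  have hNne : (N : ℂ) ≠ 0 := Nat.cast_ne_zero.mpr hN.ne'
  set c : ℂ := (2 * Real.pi * Complex.I) * ((k : ℂ) - (j : ℂ)) / (N : ℂ) with hc
  have hterm : ∀ l ∈ Finset.range N,
      Complex.exp (-(2 * Real.pi * Complex.I) * (j : ℂ) * (l : ℂ) / (N : ℂ)) *
      Complex.exp ((2 * Real.pi * Complex.I) * (k : ℂ) * (l : ℂ) / (N : ℂ))
      = Complex.exp c ^ l := by
    intro l _
    rw [← Complex.exp_add, ← Complex.exp_nat_mul]
    congr 1
    rw [← add_div, hc, mul_div_assoc]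
    congr 1
    ring
  rw [Finset.sum_congr rfl hterm]
  by_cases hjk : j = k
  · subst hjk
    simp [hc]
  · have hzN : Complex.exp c ^ N = 1 := by
      rw [← Complex.exp_nat_mul]
      have h1 : (N : ℂ) * c = ((((k : ℤ) - (j : ℤ)) : ℤ) : ℂ) * (2 * Real.pi * Complex.I) := by
        push_cast
        rw [hc]
        field_simp
      rw [h1, Complex.exp_int_mul_two_pi_mul_I]
    have hzne : Complex.exp c ≠ 1 := by
      intro h
      obtain ⟨m, hm⟩ := Complex.exp_eq_one_iff.mp h
      have h2 : (2 * (Real.pi : ℂ) * Complex.I) ≠ 0 := by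
        simp [Real.pi_ne_zero, Complex.I_ne_zero]
      have h3 : (((k : ℤ) - (j : ℤ) : ℤ) : ℂ) = ((m * N : ℤ) : ℂ) := by
        have h4 : (2 * (Real.pi : ℂ) * Complex.I) * ((k : ℂ) - (j : ℂ))
            = (2 * (Real.pi : ℂ) * Complex.I) * ((m : ℂ) * N) := by
          have h5 := congrArg (· * (N : ℂ)) hm
          simp only [hc] at h5
          rw [div_mul_cancel₀ _ hNne] at h5
          linear_combination h5
        push_cast
        exact mul_left_cancel₀ h2 h4
      have hint : (k : ℤ) - (j : ℤ) = m * N := by exact_mod_cast h3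
      have hdvd : (N : ℤ) ∣ ((k : ℤ) - j) := ⟨m, by linarith [hint]⟩
      have habs : |(k : ℤ) - j| < N := by
        rw [abs_sub_lt_iff]; constructor <;> push_cast <;> omega
      have h0 := Int.eq_zero_of_abs_lt_dvd hdvd habs
      exact hjk (by omega)
    rw [geom_sum_eq hzne, hzN]
    simp [hjk]




/-- If `f` is in the kernel of `D` on all functions on the `p`-adic tree (expressed via its
Fourier coefficients `F`) and its weak boundary limit is zero, then `f` is identically zero. -/
theorem stmt14 (p : ℕ) (hp : p.Prime) (f F : ℕ → ℕ → ℂ)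
    (hF : ∀ n l, F n l = ((p : ℂ) ^ n)⁻¹ * ∑ k ∈ Finset.range (p ^ n),
        f n k * Complex.exp (-(2 * Real.pi * Complex.I) * (k : ℂ) * (l : ℂ) / ((p : ℂ) ^ n)))
    (hker : ∀ n k, k < p ^ n → F n k = F (n + 1) (p * k))
    (hlim : ∀ m l : ℕ, ¬ p ∣ l →
        Filter.Tendsto (fun n => F n (l * p ^ (n - m) % p ^ n)) Filter.atTop (nhds 0)) :
    ∀ n k, k < p ^ n → f n k = 0 := by
  have hp1 : 1 < p := hp.one_lt
  have hp0 : 0 < p := hp.pos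
  have hpowlt : ∀ n k N, k < p ^ n → n ≤ N → k * p ^ (N - n) < p ^ N := by
    intro n k N hk hN
    have hpw : 0 < p ^ (N - n) := Nat.pow_pos hp0
    have h2 : k * p ^ (N - n) < p ^ n * p ^ (N - n) :=
      (Nat.mul_lt_mul_right hpw).mpr hk
    have h3 : p ^ n * p ^ (N - n) = p ^ N := by rw [← pow_add]; congr 1; omega
    omega
  -- Lemma B : propagation of F along the tree
  have hB : ∀ n k, k < p ^ n → ∀ N, n ≤ N → F N (k * p ^ (N - n)) = F n k := by
    intro n k hk N hN
    induction N with
    | zero =>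
      have : n = 0 := Nat.le_zero.mp hN
      subst this; simp
    | succ N ih =>
      rcases Nat.lt_or_ge n (N + 1) with h | h
      · have hn : n ≤ N := Nat.lt_succ_iff.mp h
        have hlt : k * p ^ (N - n) < p ^ N := hpowlt n k N hk hn
        have := hker N (k * p ^ (N - n)) hlt
        rw [← ih hn] at *
        rw [this]
        congr 1
        have : N + 1 - n = (N - n) + 1 := by omega
        rw [this, pow_succ]
        ring
      · have : n = N + 1 := by omega
        subst this; simp
  -- Lemma C : F vanishes on the tree
  have hC : ∀ n k, k < p ^ n → F n k = 0 := by
    intro n k hk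
    rcases Nat.eq_zero_or_pos k with rfl | hk0
    · -- k = 0 case
      have hconst : ∀ N, F N 0 = F 0 0 := by
        intro N
        induction N with
        | zero => rfl
        | succ N ih =>
          have h := hker N 0 (Nat.pow_pos hp0)
          simp only [Nat.mul_zero] at h
          rw [← h, ih]
      have hl := hlim 0 1 (by simpa using Nat.Prime.one_lt hp |>.ne')
      have heq : (fun N => F N (1 * p ^ (N - 0) % p ^ N)) = fun N => F 0 0 := by
        funext N
        simp [Nat.mod_self, hconst N]
      rw [heq] at hl
      have := tendsto_nhds_unique tendsto_const_nhds hl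
      rw [hconst n]; exact this
    · -- k ≠ 0
      set j := k.factorization p with hj
      set l := k / p ^ j with hl
      have hkl : p ^ j * l = k := Nat.ordProj_mul_ordCompl_eq_self k p
      have hpl : ¬ p ∣ l := Nat.not_dvd_ordCompl hp hk0.ne'
      have hjn : j < n := by
        have h1 : p ^ j ≤ k := Nat.ordProj_le p hk0.ne'
        have := lt_of_le_of_lt h1 hk
        exact (Nat.pow_lt_pow_iff_right hp1).mp this
      set m := n - j with hm
      have hl2 := hlim m l hpl
      have heq : ∀ᶠ N in atTop, F N (l * p ^ (N - m) % p ^ N) = F n k := by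
        filter_upwards [eventually_ge_atTop n] with N hN
        have harg : l * p ^ (N - m) = k * p ^ (N - n) := by
          rw [← hkl]
          have : N - m = j + (N - n) := by omega
          rw [this, pow_add]
          ring
        have hlt : k * p ^ (N - n) < p ^ N := hpowlt n k N hk hN
        rw [harg, Nat.mod_eq_of_lt hlt]
        exact hB n k hk N hN
      have hconst2 : Tendsto (fun _ : ℕ => F n k) atTop (nhds 0) :=
        (tendsto_congr' heq).mp hl2
      exact tendsto_nhds_unique tendsto_const_nhds hconst2
  -- Fourier inversion
  intro n k hk
  have hNpos : 0 < p ^ n := Nat.pow_pos hp0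
  have hNC : ((p : ℂ) ^ n) ≠ 0 := by
    apply pow_ne_zero
    exact_mod_cast hp0.ne'
  have horth : ∀ j ∈ Finset.range (p ^ n),
      ∑ l ∈ Finset.range (p ^ n),
        Complex.exp (-(2 * Real.pi * Complex.I) * (j : ℂ) * (l : ℂ) / ((p : ℂ) ^ n)) *
        Complex.exp ((2 * Real.pi * Complex.I) * (k : ℂ) * (l : ℂ) / ((p : ℂ) ^ n))
      = if j = k then ((p : ℂ) ^ n) else 0 := by
    intro j hj
    have h := orth (p ^ n) hNpos j k (Finset.mem_range.mp hj) hk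
    rw [Nat.cast_pow] at h
    exact h
  have main : (∑ l ∈ Finset.range (p ^ n), F n l *
      Complex.exp ((2 * Real.pi * Complex.I) * (k : ℂ) * (l : ℂ) / ((p : ℂ) ^ n))) = f n k := by
    calc (∑ l ∈ Finset.range (p ^ n), F n l *
        Complex.exp ((2 * Real.pi * Complex.I) * (k : ℂ) * (l : ℂ) / ((p : ℂ) ^ n)))
        = ∑ l ∈ Finset.range (p ^ n), ∑ j ∈ Finset.range (p ^ n), ((p : ℂ) ^ n)⁻¹ *
            (f n j * (Complex.exp (-(2 * Real.pi * Complex.I) * (j : ℂ) * (l : ℂ) / ((p : ℂ) ^ n)) *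
              Complex.exp ((2 * Real.pi * Complex.I) * (k : ℂ) * (l : ℂ) / ((p : ℂ) ^ n)))) := by
          refine Finset.sum_congr rfl fun l _ => ?_
          rw [hF n l, Finset.mul_sum, Finset.sum_mul]
          exact Finset.sum_congr rfl fun j _ => by ring
      _ = ∑ j ∈ Finset.range (p ^ n), ((p : ℂ) ^ n)⁻¹ *
            (f n j * ∑ l ∈ Finset.range (p ^ n),
              Complex.exp (-(2 * Real.pi * Complex.I) * (j : ℂ) * (l : ℂ) / ((p : ℂ) ^ n)) *
              Complex.exp ((2 * Real.pi * Complex.I) * (k : ℂ) * (l : ℂ) / ((p : ℂ) ^ n))) := by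
          rw [Finset.sum_comm]
          exact Finset.sum_congr rfl fun j _ => by rw [Finset.mul_sum, Finset.mul_sum]
      _ = ∑ j ∈ Finset.range (p ^ n), ((p : ℂ) ^ n)⁻¹ *
            (f n j * (if j = k then ((p : ℂ) ^ n) else 0)) :=
          Finset.sum_congr rfl fun j hj => by rw [horth j hj]
      _ = f n k := by
          rw [Finset.sum_eq_single k]
          · rw [if_pos rfl]
            field_simp
          · intro j _ hne
            rw [if_neg hne, mul_zero, mul_zero]
          · intro h
            exact absurd (Finset.mem_range.mpr hk) h
  have hzero : (∑ l ∈ Finset.range (p ^ n), F n l *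
      Complex.exp ((2 * Real.pi * Complex.I) * (k : ℂ) * (l : ℂ) / ((p : ℂ) ^ n))) = 0 :=
    Finset.sum_eq_zero fun l hl => by rw [hC n l (Finset.mem_range.mp hl), zero_mul]
  rw [← main, hzero]
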